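/- arXiv:1901.06837 — 2 statements merged into one kernel-verified Lean document; each statement's English description precedes it below -/
import Mathlib

section
/- Let (G,+) be a finite group, let μ be a positive integer and d a divisor of μ, and let q ≡ 1 (mod μ) be a prime power. Let Σ be a (G,k,μ) strong difference family which is of type d with respect to q, witnessed by a collection 𝔠 of k-subsets of G × F_q such that: (1) the projection of 𝔠 on G coincides with Σ, and (2) the multiset of differences Δ𝔠 equals the union over g ∈ G of {g} × D_g, where D_g = C_0^{(q−1)/d,q} · L_g and each L_g is a multiset of size μ/d on F_q^*. Suppose that for each g ∈ G, L_g is a system of representatives for the cosets of C_0^{μ/d,q} in F_q^*. Then, for any system of representatives S for the cosets of C_0^{(q−1)/d,q} in C_0^{μ/d,q}, the family 𝔅 = [C·{(1,s)} : s ∈ S, C ∈ 𝔠], where C·{(1,s)} = {(x, ys) : (x,y) ∈ C}, is a (G × F_q, G × {0}, k, 1) relative difference family. -/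
open scoped Classical

/-- The difference multiset of a multiset `A` on an additive group:
the list of differences `a - b` over ordered pairs of distinct positions of `A`. -/
def diffs {G : Type*} [AddGroup G] [DecidableEq G] (A : Multiset G) : Multiset G :=
  A.bind fun a => (A.erase a).map fun b => a - b

/-- `S` is a `(G,k,μ)` strong difference family: a family of multisets of size `k` of `G`
whose difference multiset contains every element of `G` (0 included) exactly `μ` times. -/
def IsSDF {G : Type*} [AddGroup G] [DecidableEq G]
    (S : Multiset (Multiset G)) (k μ : ℕ) : Prop :=
  (∀ A ∈ S, Multiset.card A = k) ∧ ∀ g : G, (S.bind diffs).count g = μ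

/-- `B` is a `(G,N,k,λ)` relative difference family: a family of `k`-subsets of `G` whose
difference multiset contains every element of `G \ N` exactly `λ` times and no element of `N`. -/
def IsRDF {G : Type*} [AddGroup G] [DecidableEq G]
    (B : Multiset (Finset G)) (N : AddSubgroup G) (k lam : ℕ) : Prop :=
  (∀ A ∈ B, A.card = k) ∧
  (∀ g ∈ N, (B.bind fun A => diffs A.val).count g = 0) ∧
  (∀ g : G, g ∉ N → (B.bind fun A => diffs A.val).count g = lam)

/-- The product multiset `A · L = [a * l : a ∈ A, l ∈ L]`. -/
def msMul {F : Type*} [Mul F] (A L : Multiset F) : Multiset F :=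
  A.bind fun a => L.map fun l => a * l

/-- `C0 F e` is `C_0^{e,q}`: the set of nonzero `e`-th powers of the finite field `F`
(of order `q`), viewed as a multiset with all multiplicities 1. -/
noncomputable def C0 (F : Type*) [Field F] [Fintype F] (e : ℕ) : Multiset F :=
  (Finset.univ.filter fun x : F => x ≠ 0 ∧ ∃ y : F, y ^ e = x).val

/-- A strong difference family `S` on `G` with parameter `μ` is of type `d` with respect to
the finite field `F` of (prime power) order `q`: there is a collection `C` of subsets of
`G × F` whose projection on `G` coincides with `S` and such that
`ΔC = ⋃_{g ∈ G} ({g} × D_g)` where `D_g = C_0^{(q-1)/d,q} · L_g` for some multiset `L_g`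
of size `μ/d` on `F*`. -/
def IsTypeWRT {G : Type*} [AddGroup G] [DecidableEq G]
    (F : Type*) [Field F] [Fintype F] [DecidableEq F]
    (S : Multiset (Multiset G)) (μ d : ℕ) : Prop :=
  ∃ C : Multiset (Finset (G × F)),
    (C.map fun c => c.val.map Prod.fst) = S ∧
    ∃ L : G → Multiset F,
      (∀ g : G, Multiset.card (L g) = μ / d ∧ (0 : F) ∉ L g) ∧
      ∀ (g : G) (x : F),
        (C.bind fun c => diffs c.val).count (g, x)
          = (msMul (C0 F ((Fintype.card F - 1) / d)) (L g)).count x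

/-- The bound `Q(d,m) = (1/4) (U + √(U² + 4 d^{m-1} m))²`, where
`U = Σ_{h=1}^m C(m,h)(d-1)^h (h-1)`. -/
noncomputable def Qbound (d m : ℕ) : ℝ :=
  let U : ℝ := ∑ h ∈ Finset.Icc 1 m, (m.choose h : ℝ) * ((d : ℝ) - 1) ^ h * ((h : ℝ) - 1)
  (1 / 4) * (U + Real.sqrt (U ^ 2 + 4 * (d : ℝ) ^ (m - 1) * (m : ℝ))) ^ 2

/-- `(Gr, Bl)` is a `k`-GDD on the point set `X`: `Gr` partitions `X` into groups, all blocks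
have size `k`, and every pair of distinct points is contained in exactly one block or exactly
one group, but not in both. -/
def IsGDD {X : Type*} [DecidableEq X] (Gr Bl : Finset (Finset X)) (k : ℕ) : Prop :=
  (∀ x : X, (Gr.filter fun g => x ∈ g).card = 1) ∧
  (∀ b ∈ Bl, b.card = k) ∧
  ∀ x y : X, x ≠ y →
    (Gr.filter fun g => x ∈ g ∧ y ∈ g).card + (Bl.filter fun b => x ∈ b ∧ y ∈ b).card = 1

/-- The multiset of differences of a collection of codewords. -/
def oocDiffs {v : ℕ} (C : Finset (Finset (ZMod v))) : Multiset (ZMod v) :=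
  C.val.bind fun B => diffs B.val

/-- A `(v,k,1)` optical orthogonal code: a set of `k`-subsets of `Z_v` whose list of
differences contains no repeated element. -/
def IsOOC (v k : ℕ) (C : Finset (Finset (ZMod v))) : Prop :=
  (∀ B ∈ C, B.card = k) ∧ ∀ x : ZMod v, (oocDiffs C).count x ≤ 1

/-- An optimal `(v,k,1)`-OOC: the number of nonzero elements of `Z_v` missing from its
list of differences is at most `k(k-1)`. -/
def IsOptimalOOC (v k : ℕ) (C : Finset (Finset (ZMod v))) : Prop :=
  IsOOC v k C ∧ {x : ZMod v | x ≠ 0 ∧ (oocDiffs C).count x = 0}.ncard ≤ k * (k - 1)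

set_option linter.unusedSectionVars false

section aux
variable {F : Type*} [Field F] [Fintype F] [DecidableEq F]

lemma mem_C0 {e : ℕ} {x : F} : x ∈ C0 F e ↔ x ≠ 0 ∧ ∃ y : F, y ^ e = x := by
  simp [C0]

lemma nodup_C0 {e : ℕ} : (C0 F e).Nodup := by unfold C0; exact Finset.nodup _

lemma mem_msMul {A L : Multiset F} {x : F} :
    x ∈ msMul A L ↔ ∃ a ∈ A, ∃ l ∈ L, a * l = x := by
  simp [msMul, eq_comm]

lemma msMul_swap (A B : Multiset F) : msMul A B = B.bind fun b => A.map fun a => a * b := by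
  unfold msMul
  rw [Multiset.bind_map_comm]

lemma count_msMul_right (M T : Multiset F) (hT : ∀ s ∈ T, s ≠ 0) (x : F) :
    (msMul M T).count x = (T.map fun s => M.count (x * s⁻¹)).sum := by
  rw [msMul_swap, Multiset.count_bind]
  congr 1
  apply Multiset.map_congr rfl
  intro s hs
  have hs0 := hT s hs
  have h := Multiset.count_map_eq_count' (fun a => a * s) M
    (fun a b h => by exact mul_right_cancel₀ hs0 h) (x * s⁻¹)
  rw [← h]
  congr 1
  field_simp

lemma msMul_assoc (A B C : Multiset F) : msMul (msMul A B) C = msMul A (msMul B C) := by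
  unfold msMul
  rw [Multiset.bind_assoc]
  apply Multiset.bind_congr
  intro a _
  rw [Multiset.bind_map, Multiset.map_bind]
  apply Multiset.bind_congr
  intro b _
  rw [Multiset.map_map]
  simp [Function.comp, mul_assoc]

lemma msMul_comm (A B : Multiset F) : msMul A B = msMul B A := by
  rw [msMul_swap]
  unfold msMul
  apply Multiset.bind_congr
  intro b _
  simp [mul_comm]

end aux

lemma diffs_map' {α β : Type*} [AddGroup α] [AddGroup β] [DecidableEq α] [DecidableEq β]
    (f : α → β) (hf : Function.Injective f) (hadd : ∀ a b : α, f (a - b) = f a - f b)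
    (A : Multiset α) : diffs (A.map f) = (diffs A).map f := by
  unfold diffs
  rw [Multiset.bind_map, Multiset.map_bind]
  apply Multiset.bind_congr
  intro a _
  rw [← Multiset.map_erase f hf, Multiset.map_map, Multiset.map_map]
  apply Multiset.map_congr rfl
  intro b _
  simp [Function.comp, hadd]

/-- Proposition 1.4. If a `(G,k,μ)`-SDF `S` is of type `d` with respect to
a prime power `q ≡ 1 (mod μ)`, witnessed by a collection `C` of `k`-subsets of `G × F_q`, and
each `L_g` is a system of representatives for the cosets of `C_0^{μ/d,q}` in `F_q*`, then
for any system of representatives `T` for the cosets of `C_0^{(q-1)/d,q}` in `C_0^{μ/d,q}`,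
the family `[c · {(1,s)} : s ∈ T, c ∈ C]` is a `(G × F_q, G × {0}, k, 1)`-DF. -/
theorem stmt0 {G : Type*} [AddGroup G] [Fintype G] [DecidableEq G]
    (F : Type*) [Field F] [Fintype F] [DecidableEq F]
    (k μ d : ℕ) (hμ : 0 < μ) (hd : d ∣ μ)
    (hq : Fintype.card F % μ = 1)
    (S : Multiset (Multiset G)) (hSDF : IsSDF S k μ)
    (C : Multiset (Finset (G × F)))
    (hcard : ∀ c ∈ C, c.card = k)
    (hproj : (C.map fun c => c.val.map Prod.fst) = S)
    (L : G → Multiset F)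
    (hL : ∀ g : G, Multiset.card (L g) = μ / d ∧ (0 : F) ∉ L g)
    (hdiff : ∀ (g : G) (x : F),
      (C.bind fun c => diffs c.val).count (g, x)
        = (msMul (C0 F ((Fintype.card F - 1) / d)) (L g)).count x)
    (hrep : ∀ (g : G) (x : F), x ≠ 0 → (msMul (C0 F (μ / d)) (L g)).count x = 1)
    (T : Multiset F)
    (hT1 : ∀ s ∈ T, s ∈ C0 F (μ / d))
    (hT2 : ∀ x ∈ C0 F (μ / d), (msMul (C0 F ((Fintype.card F - 1) / d)) T).count x = 1) :
    IsRDF (T.bind fun s => C.map fun c => c.image fun p => (p.1, p.2 * s))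
      ((⊤ : AddSubgroup G).prod ⊥) k 1 := by
  classical
  set q := Fintype.card F with hqdef
  have hd0 : d ≠ 0 := by rintro rfl; simp at hd; omega
  have hq2 : 2 ≤ q := Fintype.one_lt_card
  have hμdvd : q - 1 = μ * (q / μ) := by
    have h1 := Nat.div_add_mod q μ
    have h2 : μ ≠ 1 := by rintro rfl; simp [Nat.mod_one] at hq
    omega
  obtain ⟨m', hm'⟩ := hd
  have hm'_eq : μ / d = m' := by
    rw [hm']; exact Nat.mul_div_cancel_left _ (Nat.pos_of_ne_zero hd0)
  have he : (q - 1) / d = m' * (q / μ) := by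
    rw [hμdvd, hm', mul_assoc, Nat.mul_div_cancel_left _ (Nat.pos_of_ne_zero hd0)]
  have hTne : ∀ s ∈ T, s ≠ 0 := fun s hs => (mem_C0.mp (hT1 s hs)).1
  have hclosed : ∀ x ∈ msMul (C0 F ((q - 1) / d)) T, x ∈ C0 F (μ / d) := by
    intro x hx
    obtain ⟨a, ha, t, ht, rfl⟩ := mem_msMul.mp hx
    obtain ⟨ha0, y, hy⟩ := mem_C0.mp ha
    obtain ⟨ht0, z, hz⟩ := mem_C0.mp (hT1 t ht)
    refine mem_C0.mpr ⟨mul_ne_zero ha0 ht0, y ^ (q / μ) * z, ?_⟩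
    rw [mul_pow, hz, ← pow_mul, hm'_eq, mul_comm (q / μ) m', ← he, hy]
  have hkey : msMul (C0 F ((q - 1) / d)) T = C0 F (μ / d) := by
    refine Multiset.ext.mpr fun x => ?_
    by_cases hx : x ∈ C0 F (μ / d)
    · rw [hT2 x hx, Multiset.count_eq_one_of_mem nodup_C0 hx]
    · rw [Multiset.count_eq_zero_of_notMem hx,
        Multiset.count_eq_zero_of_notMem (fun h => hx (hclosed x h))]
  have hfsinj : ∀ s : F, s ≠ 0 →
      Function.Injective (fun p : G × F => (p.1, p.2 * s)) := by
    intro s hs0 a b hab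
    simp only [Prod.mk.injEq] at hab
    exact Prod.ext hab.1 (mul_right_cancel₀ hs0 hab.2)
  have hfssub : ∀ s : F, ∀ a b : G × F,
      (fun p : G × F => (p.1, p.2 * s)) (a - b)
        = (fun p : G × F => (p.1, p.2 * s)) a - (fun p : G × F => (p.1, p.2 * s)) b := by
    intro s a b
    simp [Prod.ext_iff, sub_mul]
  set Δ := C.bind fun c => diffs c.val with hΔ
  have hbind : ((T.bind fun s => C.map fun c => c.image fun p => (p.1, p.2 * s)).bind
        fun A => diffs A.val)
      = T.bind fun s => Δ.map fun p : G × F => (p.1, p.2 * s) := by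
    rw [Multiset.bind_assoc]
    apply Multiset.bind_congr
    intro s hs
    rw [Multiset.bind_map, hΔ, Multiset.map_bind]
    apply Multiset.bind_congr
    intro c hc
    have himg : (c.image fun p : G × F => (p.1, p.2 * s)).val
        = c.val.map fun p : G × F => (p.1, p.2 * s) :=
      Finset.image_val_of_injOn ((hfsinj s (hTne s hs)).injOn)
    rw [himg, diffs_map' _ (hfsinj s (hTne s hs)) (hfssub s)]
  have hcount : ∀ (g : G) (x : F),
      (((T.bind fun s => C.map fun c => c.image fun p => (p.1, p.2 * s)).bind
        fun A => diffs A.val).count (g, x))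
      = (msMul (C0 F (μ / d)) (L g)).count x := by
    intro g x
    rw [hbind, Multiset.count_bind]
    have step : ∀ s ∈ T,
        ((Δ.map fun p : G × F => (p.1, p.2 * s)).count (g, x))
          = (msMul (C0 F ((q - 1) / d)) (L g)).count (x * s⁻¹) := by
      intro s hs
      have hs0 := hTne s hs
      have h := Multiset.count_map_eq_count' (fun p : G × F => (p.1, p.2 * s)) Δ
        (hfsinj s hs0) (g, x * s⁻¹)
      have heq : ((((g, x * s⁻¹) : G × F)).1, (((g, x * s⁻¹) : G × F)).2 * s)
          = ((g, x) : G × F) := Prod.ext rfl (by field_simp)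
      rw [heq] at h
      rw [h, hdiff]
    calc (T.map fun s => (Δ.map fun p : G × F => (p.1, p.2 * s)).count (g, x)).sum
        = (T.map fun s => (msMul (C0 F ((q - 1) / d)) (L g)).count (x * s⁻¹)).sum := by
          exact congrArg _ (Multiset.map_congr rfl step)
      _ = (msMul (msMul (C0 F ((q - 1) / d)) (L g)) T).count x :=
          (count_msMul_right _ _ hTne x).symm
      _ = (msMul (msMul (C0 F ((q - 1) / d)) T) (L g)).count x := by
          rw [msMul_assoc, msMul_assoc, msMul_comm (L g) T]
      _ = (msMul (C0 F (μ / d)) (L g)).count x := by rw [hkey]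
  refine ⟨?_, ?_, ?_⟩
  · intro A hA
    rw [Multiset.mem_bind] at hA
    obtain ⟨s, hs, hA⟩ := hA
    rw [Multiset.mem_map] at hA
    obtain ⟨c, hc, rfl⟩ := hA
    rw [Finset.card_image_of_injective _ (hfsinj s (hTne s hs))]
    exact hcard c hc
  · rintro ⟨g, x⟩ hgx
    have hx0 : x = 0 := by
      have := (AddSubgroup.mem_prod.mp hgx).2
      simpa using this
    subst hx0
    rw [hcount g 0, Multiset.count_eq_zero_of_notMem]
    intro h
    obtain ⟨a, ha, l, hl, hal⟩ := mem_msMul.mp h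
    have hl0 : l ≠ 0 := fun h0 => (hL g).2 (h0 ▸ hl)
    exact (mul_ne_zero (mem_C0.mp ha).1 hl0) hal
  · rintro ⟨g, x⟩ hgx
    have hx0 : x ≠ 0 := by
      intro h0
      exact hgx (AddSubgroup.mem_prod.mpr ⟨trivial, by simp [h0]⟩)
    rw [hcount g x]
    exact hrep g x hx0
end

section
/- Let r ≥ 5 be an integer, let α be a permutation of the elements of Z_r, and let a ∈ Z_r. Then there exists a permutation π of the elements of Z_r such that for every x ∈ Z_r with α(x) ≠ x, one has π(α(x)) − π(x) ≠ a. -/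
open scoped Classical

open Equiv Equiv.Perm List

/-- product of a pairwise-disjoint list of permutations at a point moved by a member -/
private lemma prod_apply_mem {G : Type*} (l : List (Perm G)) (hl : l.Pairwise Perm.Disjoint)
    (σ : Perm G) (hσ : σ ∈ l) (y : G) (hy : σ y ≠ y) : l.prod y = σ y := by
  induction l with
  | nil => simp at hσ
  | cons τ t ih =>
    rw [List.pairwise_cons] at hl
    rw [List.prod_cons, Perm.mul_apply]
    rcases List.mem_cons.mp hσ with rfl | hmem
    · have ht : t.prod y = y := by
        clear ih
        induction t with
        | nil => simp
        | cons ρ s ihs =>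
          rw [List.prod_cons, Perm.mul_apply]
          have h1 : ρ y = y := by
            rcases hl.1 ρ (List.mem_cons_self) y with h | h
            · exact absurd h hy
            · exact h
          rw [ihs ⟨fun x hx => hl.1 x (List.mem_cons_of_mem _ hx), hl.2.of_cons⟩
            (by simp), h1]
      rw [ht]
    · have h2 : t.prod y = σ y := ih hl.2 hmem
      rw [h2]
      rcases hl.1 σ hmem (σ y) with h | h
      · exact h
      · exact absurd (σ.injective h) hy

private lemma prod_apply_fixed {G : Type*} (l : List (Perm G)) (y : G)
    (h : ∀ σ ∈ l, σ y = y) : l.prod y = y := by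
  induction l with
  | nil => simp
  | cons τ t ih =>
    rw [List.prod_cons, Perm.mul_apply, ih (fun σ hσ => h σ (List.mem_cons_of_mem _ hσ)),
      h τ (List.mem_cons_self)]


section Engine
variable {r : ℕ} [NeZero r]

private lemma cast_inj_ltX {m n : ℕ} (hm : m < r) (hn : n < r)
    (h : (m : ZMod r) = (n : ZMod r)) : m = n := by
  have := congrArg ZMod.val h
  rwa [ZMod.val_cast_of_lt hm, ZMod.val_cast_of_lt hn] at this

/-- cyclic avoidance condition for a block given as a list of naturals -/
private def AvoidsX (r : ℕ) (a : ZMod r) (P : List ℕ) : Prop :=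
  ∀ i, i < P.length →
    ((P.getD ((i + 1) % P.length) 0 : ℕ) : ZMod r) ≠ ((P.getD i 0 : ℕ) : ZMod r) + a

private lemma engine (hr : 5 ≤ r) (a : ZMod r) (ha : a ≠ 0) (B : List (List ℕ))
    (hlen : ∀ P ∈ B, 2 ≤ P.length)
    (hnd : B.flatten.Nodup)
    (hlt : ∀ n ∈ B.flatten, n < r)
    (hav : ∀ P ∈ B, AvoidsX r a P) :
    ∃ β : Perm (ZMod r), β.cycleType = (B.map List.length : Multiset ℕ) ∧
      ∀ y, β y ≠ y + a := by
  classical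
  have hba : (0 : ZMod r) ≠ a := fun h => ha h.symm
  obtain ⟨hnd1, hnd2⟩ := List.nodup_flatten.mp hnd
  set f : ℕ → ZMod r := fun n => (n : ZMod r) with hf
  set Lp : List (Perm (ZMod r)) := B.map (fun P => (P.map f).formPerm) with hLp
  -- nodup of cast lists
  have hcnd : ∀ P ∈ B, (P.map f).Nodup := by
    intro P hP
    refine List.Nodup.map_on ?_ (hnd1 P hP)
    intro x hx y hy hxy
    exact cast_inj_ltX (hlt x (List.mem_flatten.mpr ⟨P, hP, hx⟩))
      (hlt y (List.mem_flatten.mpr ⟨P, hP, hy⟩)) hxy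
  have hne1 : ∀ P ∈ B, ∀ x : ZMod r, P.map f ≠ [x] := by
    intro P hP x h
    have := hlen P hP
    have : (P.map f).length = 1 := by rw [h]; rfl
    simp only [List.length_map] at this
    omega
  have hcyc : ∀ σ ∈ Lp, σ.IsCycle := by
    intro σ hσ
    simp only [hLp, List.mem_map] at hσ
    obtain ⟨P, hP, rfl⟩ := hσ
    exact List.isCycle_formPerm (hcnd P hP) (by simpa using hlen P hP)
  have hsupp : ∀ P ∈ B, ((P.map f).formPerm).support = (P.map f).toFinset := by
    intro P hP
    exact List.support_formPerm_of_nodup _ (hcnd P hP) (hne1 P hP)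
  have hdisj : Lp.Pairwise Perm.Disjoint := by
    rw [hLp, List.pairwise_map]
    refine hnd2.imp_of_mem ?_
    intro P Q hP hQ hPQ
    rw [Perm.disjoint_iff_disjoint_support, hsupp P hP, hsupp Q hQ]
    rw [List.disjoint_toFinset_iff_disjoint]
    intro x hx hx'
    obtain ⟨p, hp, rfl⟩ := List.mem_map.mp hx
    obtain ⟨q, hq, hqe⟩ := List.mem_map.mp hx'
    have : q = p := cast_inj_ltX (hlt q (List.mem_flatten.mpr ⟨Q, hQ, hq⟩))
      (hlt p (List.mem_flatten.mpr ⟨P, hP, hp⟩)) hqe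
    subst this
    exact hPQ hp hq
  refine ⟨Lp.prod, ?_, ?_⟩
  · rw [Equiv.Perm.cycleType_eq Lp rfl hcyc hdisj]
    simp only [hLp, List.map_map]
    congr 1
    refine List.map_congr_left ?_
    intro P hP
    simp only [Function.comp_apply, hsupp P hP,
      List.toFinset_card_of_nodup (hcnd P hP), List.length_map]
  · intro y
    by_cases hy : ∃ P ∈ B, y ∈ P.map f
    · obtain ⟨P, hP, hyP⟩ := hy
      obtain ⟨i, hi, hie⟩ := List.mem_iff_getElem.mp hyP
      have hlP : 2 ≤ P.length := hlen P hP
      have hiP : i < P.length := by simpa using hi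
      have hmod : (i + 1) % P.length < P.length := Nat.mod_lt _ (by omega)
      have hnext : ((P.map f).formPerm) y = f (P[(i + 1) % P.length]) := by
        rw [← hie]
        rw [List.formPerm_apply_getElem _ (hcnd P hP) i hi]
        simp only [List.getElem_map, List.length_map]
      have hne : ((P.map f).formPerm) y ≠ y := by
        rw [hnext, ← hie]
        simp only [List.getElem_map]
        intro h
        have := cast_inj_ltX
          (hlt _ (List.mem_flatten.mpr ⟨P, hP, List.getElem_mem _⟩))
          (hlt _ (List.mem_flatten.mpr ⟨P, hP, List.getElem_mem _⟩)) h
        have hii : (i + 1) % P.length = i :=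
          ((hnd1 P hP).getElem_inj_iff).mp this
        rcases Nat.lt_or_ge (i+1) P.length with hc | hc
        · rw [Nat.mod_eq_of_lt hc] at hii; omega
        · have : i + 1 = P.length := by omega
          rw [this, Nat.mod_self] at hii; omega
      have hprod : Lp.prod y = ((P.map f).formPerm) y :=
        prod_apply_mem Lp hdisj _ (List.mem_map.mpr ⟨P, hP, rfl⟩) y hne
      rw [hprod, hnext, ← hie]
      have := hav P hP i hiP
      rw [List.getD_eq_getElem _ _ hmod, List.getD_eq_getElem _ _ hiP] at this
      simpa only [List.getElem_map] using this
    · push_neg at hy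
      have : Lp.prod y = y := by
        refine prod_apply_fixed Lp y ?_
        intro σ hσ
        obtain ⟨P, hP, rfl⟩ := List.mem_map.mp hσ
        exact List.formPerm_apply_of_notMem (hy P hP)
      rw [this]
      intro h
      exact ha (by linear_combination -h)

end Engine


section Patterns
variable {r : ℕ} [NeZero r]

/-- descending interval [v+l-1, ..., v] -/
private def descL (v l : ℕ) : List ℕ := (List.range l).map (fun i => v + (l - 1 - i))
/-- ascending interval [v, ..., v+l-1] -/
private def ascL (v l : ℕ) : List ℕ := (List.range l).map (fun i => v + i)
/-- ascending with last two swapped -/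
private def swapL (v l : ℕ) : List ℕ :=
  (List.range l).map (fun i => v + (if i = l - 1 then l - 2 else if i = l - 2 then l - 1 else i))

private lemma descL_length (v l : ℕ) : (descL v l).length = l := by simp [descL]
private lemma ascL_length (v l : ℕ) : (ascL v l).length = l := by simp [ascL]
private lemma swapL_length (v l : ℕ) : (swapL v l).length = l := by simp [swapL]

private lemma descL_nodup (v l : ℕ) : (descL v l).Nodup := by
  refine List.Nodup.map_on ?_ (List.nodup_range)
  intro x hx y hy h
  simp only [List.mem_range] at hx hy
  omega

private lemma ascL_nodup (v l : ℕ) : (ascL v l).Nodup := by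
  refine List.Nodup.map_on ?_ (List.nodup_range)
  intro x hx y hy h
  simp only [List.mem_range] at hx hy
  omega

private lemma swapL_nodup (v l : ℕ) : (swapL v l).Nodup := by
  refine List.Nodup.map_on ?_ (List.nodup_range)
  intro x hx y hy h
  simp only [List.mem_range] at hx hy
  split_ifs at h <;> omega

private lemma descL_mem {v l x : ℕ} (h : x ∈ descL v l) : v ≤ x ∧ x < v + l := by
  simp only [descL, List.mem_map, List.mem_range] at h
  obtain ⟨i, hi, rfl⟩ := h; omega

private lemma ascL_mem {v l x : ℕ} (h : x ∈ ascL v l) : v ≤ x ∧ x < v + l := by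
  simp only [ascL, List.mem_map, List.mem_range] at h
  obtain ⟨i, hi, rfl⟩ := h; omega

private lemma swapL_mem {v l x : ℕ} (h : x ∈ swapL v l) : v ≤ x ∧ x < v + l := by
  simp only [swapL, List.mem_map, List.mem_range] at h
  obtain ⟨i, hi, rfl⟩ := h; split_ifs <;> omega


private lemma range_map_getD (g : ℕ → ℕ) {l i : ℕ} (hi : i < l) :
    (((List.range l).map g).getD i 0) = g i := by
  rw [List.getD_eq_getElem _ _ (by simpa using hi)]
  simp

private lemma descL_getD {v l i : ℕ} (hi : i < l) :
    (descL v l).getD i 0 = v + (l - 1 - i) := range_map_getD _ hi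
private lemma ascL_getD {v l i : ℕ} (hi : i < l) :
    (ascL v l).getD i 0 = v + i := range_map_getD _ hi
private lemma swapL_getD {v l i : ℕ} (hi : i < l) :
    (swapL v l).getD i 0 = v + (if i = l - 1 then l - 2 else if i = l - 2 then l - 1 else i) :=
  range_map_getD _ hi

private lemma descL_avoids {a : ZMod r} {v l : ℕ} (hl : 2 ≤ l)
    (h1 : a ≠ -1) (h2 : ((l - 1 : ℕ) : ZMod r) ≠ a) : AvoidsX r a (descL v l) := by
  intro i hi
  rw [descL_length] at hi
  have hmod : (i + 1) % l < l := Nat.mod_lt _ (by omega)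
  rw [descL_length, descL_getD hmod, descL_getD hi]
  rcases Nat.lt_or_ge (i + 1) l with hc | hc
  · rw [Nat.mod_eq_of_lt hc]
    have e1 : l - 1 - (i + 1) = l - 2 - i := by omega
    have e2 : l - 1 - i = (l - 2 - i) + 1 := by omega
    rw [e1, e2]
    intro h
    apply h1
    push_cast at h
    linear_combination -h
  · have hc' : i + 1 = l := by omega
    have : i = l - 1 := by omega
    subst this
    rw [hc', Nat.mod_self]
    have e1 : l - 1 - 0 = l - 1 := by omega
    have e2 : l - 1 - (l - 1) = 0 := by omega
    rw [e1, e2, Nat.add_zero]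
    intro h
    apply h2
    push_cast at h ⊢
    linear_combination h

private lemma ascL_avoids {a : ZMod r} {v l : ℕ} (hl : 2 ≤ l)
    (h1 : a ≠ 1) (h2 : -((l - 1 : ℕ) : ZMod r) ≠ a) : AvoidsX r a (ascL v l) := by
  intro i hi
  rw [ascL_length] at hi
  have hmod : (i + 1) % l < l := Nat.mod_lt _ (by omega)
  rw [ascL_length, ascL_getD hmod, ascL_getD hi]
  rcases Nat.lt_or_ge (i + 1) l with hc | hc
  · rw [Nat.mod_eq_of_lt hc]
    intro h
    apply h1
    push_cast at h
    linear_combination -h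
  · have hc' : i + 1 = l := by omega
    have : i = l - 1 := by omega
    subst this
    rw [hc', Nat.mod_self]
    intro h
    apply h2
    push_cast [Nat.cast_sub (by omega : 1 ≤ l)] at h ⊢
    linear_combination h

private lemma swapL_avoids {a : ZMod r} {v l : ℕ} (hl : 4 ≤ l)
    (h1 : a ≠ 1) (h2 : a ≠ 2) (h3 : a ≠ -1) (h4 : -((l - 2 : ℕ) : ZMod r) ≠ a) :
    AvoidsX r a (swapL v l) := by
  intro i hi
  rw [swapL_length] at hi
  have hmod : (i + 1) % l < l := Nat.mod_lt _ (by omega)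
  rw [swapL_length, swapL_getD hmod, swapL_getD hi]
  rcases Nat.lt_or_ge (i + 1) l with hc | hc
  · rw [Nat.mod_eq_of_lt hc]
    rcases eq_or_ne (i + 1) (l - 1) with he | he
    · -- step from l-2 to l-1 positions: value l-1 -> l-2 : diff -1
      have hi' : i = l - 2 := by omega
      rw [he, hi']
      simp only [if_pos rfl, if_neg (by omega : ¬ (l - 2 = l - 1)), if_pos rfl]
      intro h
      apply h3
      have e2 : l - 1 = (l - 2) + 1 := by omega
      rw [e2] at h
      push_cast at h
      linear_combination -h
    · rcases eq_or_ne (i + 1) (l - 2) with he2 | he2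
      · -- step from l-3 to l-2 positions: value l-3 -> l-1 : diff 2
        have hi' : i = l - 3 := by omega
        rw [he2, hi']
        simp only [if_neg (by omega : ¬ (l - 2 = l - 1)), if_pos rfl,
          if_neg (by omega : ¬ (l - 3 = l - 1)), if_neg (by omega : ¬ (l - 3 = l - 2))]
        intro h
        apply h2
        have e2 : l - 1 = (l - 3) + 2 := by omega
        rw [e2] at h
        push_cast at h
        linear_combination -h
      · -- ordinary ascending step
        have hne1 : i ≠ l - 1 := by omega
        have hne2 : i ≠ l - 2 := by omega
        simp only [if_neg he, if_neg he2, if_neg hne1, if_neg hne2]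
        intro h
        apply h1
        push_cast at h
        linear_combination -h
  · have hc' : i + 1 = l := by omega
    have hi' : i = l - 1 := by omega
    subst hi'
    rw [hc', Nat.mod_self]
    simp only [if_pos rfl, if_neg (by omega : ¬ (0 = l - 1)),
      if_neg (by omega : ¬ (0 = l - 2)), Nat.add_zero]
    intro h
    apply h4
    push_cast at h ⊢
    linear_combination h

end Patterns


section Mk
variable {r : ℕ} [NeZero r]

private def mkB (pat : ℕ → ℕ → List ℕ) : ℕ → List ℕ → List (List ℕ)
  | _, [] => []
  | v, l :: ls => pat v l :: mkB pat (v + l) ls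

private lemma mk_map_length {pat : ℕ → ℕ → List ℕ}
    (Hlen : ∀ v l, (pat v l).length = l) :
    ∀ (ls : List ℕ) (v : ℕ), (mkB pat v ls).map List.length = ls := by
  intro ls
  induction ls with
  | nil => intro v; rfl
  | cons l t ih => intro v; simp [mkB, Hlen, ih]

private lemma mk_flatten_mem {pat : ℕ → ℕ → List ℕ}
    (Hmem : ∀ v l, ∀ x ∈ pat v l, v ≤ x ∧ x < v + l) :
    ∀ (ls : List ℕ) (v : ℕ), ∀ x ∈ (mkB pat v ls).flatten, v ≤ x ∧ x < v + ls.sum := by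
  intro ls
  induction ls with
  | nil => intro v x hx; simp [mkB] at hx
  | cons l t ih =>
    intro v x hx
    simp only [mkB, List.flatten_cons, List.mem_append] at hx
    rcases hx with hx | hx
    · have := Hmem v l x hx
      simp only [List.sum_cons]
      omega
    · have := ih (v + l) x hx
      simp only [List.sum_cons]
      omega

private lemma mk_flatten_nodup {pat : ℕ → ℕ → List ℕ}
    (Hmem : ∀ v l, ∀ x ∈ pat v l, v ≤ x ∧ x < v + l)
    (Hnd : ∀ v l, (pat v l).Nodup) :
    ∀ (ls : List ℕ) (v : ℕ), (mkB pat v ls).flatten.Nodup := by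
  intro ls
  induction ls with
  | nil => intro v; simp [mkB]
  | cons l t ih =>
    intro v
    simp only [mkB, List.flatten_cons]
    rw [List.nodup_append]
    refine ⟨Hnd v l, ih (v + l), ?_⟩
    intro x hx y hx' hxy
    subst hxy
    have h1 := Hmem v l x hx
    have h2 := mk_flatten_mem Hmem t (v + l) x hx'
    omega

private lemma mk_mem_blocks {pat : ℕ → ℕ → List ℕ} :
    ∀ (ls : List ℕ) (v : ℕ), ∀ P ∈ mkB pat v ls, ∃ w l, l ∈ ls ∧ P = pat w l := by
  intro ls
  induction ls with
  | nil => intro v P hP; simp [mkB] at hP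
  | cons l t ih =>
    intro v P hP
    simp only [mkB, List.mem_cons] at hP
    rcases hP with rfl | hP
    · exact ⟨v, l, by simp⟩
    · obtain ⟨w, l', hl', rfl⟩ := ih (v + l) P hP
      exact ⟨w, l', by simp [hl'], rfl⟩

end Mk


section Special
variable {r : ℕ} [NeZero r]

/-- avoidance for a 2-element block with a = 1 -/
private lemma pair_avoids (hr : 5 ≤ r) {x y : ℕ} (hx : x < r) (hy : y < r)
    (h1 : (y : ZMod r) ≠ (x : ZMod r) + 1) (h2 : (x : ZMod r) ≠ (y : ZMod r) + 1) :
    AvoidsX r 1 [x, y] := by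
  intro i hi
  simp only [List.length_cons, List.length_nil] at hi
  interval_cases i
  · simpa using h1
  · simpa using h2

private def comboL (l : ℕ) : List ℕ :=
  (List.range l).map (fun i => if i = l - 1 then 1 else l + 1 - i)

private lemma comboL_length (l : ℕ) : (comboL l).length = l := by simp [comboL]

private lemma comboL_getD {l i : ℕ} (hi : i < l) :
    (comboL l).getD i 0 = if i = l - 1 then 1 else l + 1 - i := by
  rw [comboL, List.getD_eq_getElem _ _ (by simpa using hi)]
  simp

private lemma comboL_mem {l x : ℕ} (hl : 3 ≤ l) (h : x ∈ comboL l) :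
    x = 1 ∨ (3 ≤ x ∧ x ≤ l + 1) := by
  simp only [comboL, List.mem_map, List.mem_range] at h
  obtain ⟨i, hi, rfl⟩ := h
  split_ifs <;> omega

private lemma comboL_nodup {l : ℕ} (hl : 3 ≤ l) : (comboL l).Nodup := by
  refine List.Nodup.map_on ?_ (List.nodup_range)
  intro x hx y hy h
  simp only [List.mem_range] at hx hy
  split_ifs at h <;> omega

private lemma comboL_avoids (hr : 5 ≤ r) {l : ℕ} (hl : 3 ≤ l) (hlr : l + 2 ≤ r) :
    AvoidsX r 1 (comboL l) := by
  intro i hi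
  rw [comboL_length] at hi
  have hmod : (i + 1) % l < l := Nat.mod_lt _ (by omega)
  rw [comboL_length, comboL_getD hmod, comboL_getD hi]
  rcases Nat.lt_or_ge (i + 1) l with hc | hc
  · rw [Nat.mod_eq_of_lt hc]
    rcases eq_or_ne (i + 1) (l - 1) with he | he
    · have hi' : i ≠ l - 1 := by omega
      rw [if_pos he, if_neg hi']
      have e : l + 1 - i = 3 := by omega
      rw [e]
      intro h
      have h4 : ((1 : ℕ) : ZMod r) = ((4 : ℕ) : ZMod r) := by
        push_cast at h ⊢
        linear_combination h
      have := cast_inj_ltX (by omega) (by omega) h4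
      omega
    · have hi' : i ≠ l - 1 := by omega
      rw [if_neg he, if_neg hi']
      have e : l + 1 - i = (l + 1 - (i + 1)) + 1 := by omega
      rw [e]
      intro h
      push_cast at h
      have h2 : ((2 : ℕ) : ZMod r) = 0 := by push_cast; linear_combination -h
      rw [ZMod.natCast_eq_zero_iff] at h2
      exact absurd (Nat.le_of_dvd (by norm_num) h2) (by omega)
  · have hc' : i + 1 = l := by omega
    have hi' : i = l - 1 := by omega
    subst hi'
    rw [hc', Nat.mod_self]
    rw [if_pos rfl, if_neg (by omega : ¬ (0 = l - 1)), Nat.sub_zero]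
    intro h
    have h4 : ((l + 1 : ℕ) : ZMod r) = ((2 : ℕ) : ZMod r) := by
      push_cast at h ⊢
      linear_combination h
    have := cast_inj_ltX (by omega) (by omega) h4
    omega

end Special


section Main
variable {r : ℕ} [NeZero r]

private lemma mem_le_sum {M : Multiset ℕ} {l : ℕ} (h : l ∈ M) : l ≤ M.sum := by
  obtain ⟨M', rfl⟩ := Multiset.exists_cons_of_mem h
  simp

private def pairsL (u : ℕ) : List (List ℕ) := (List.range u).map (fun j => [j, j + u])

private lemma pairsL_map_length (u : ℕ) : (pairsL u).map List.length = List.replicate u 2 := by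
  rw [pairsL, List.map_map]
  refine List.eq_replicate_iff.mpr ⟨by simp, ?_⟩
  intro b hb
  simp only [List.mem_map, List.mem_range] at hb
  obtain ⟨j, _, rfl⟩ := hb
  rfl

private lemma pairsL_flatten_mem {u x : ℕ} (h : x ∈ (pairsL u).flatten) : x < 2 * u := by
  rw [List.mem_flatten] at h
  obtain ⟨P, hP, hx⟩ := h
  simp only [pairsL, List.mem_map, List.mem_range] at hP
  obtain ⟨j, hj, rfl⟩ := hP
  simp only [List.mem_cons, List.not_mem_nil, or_false] at hx
  rcases hx with rfl | rfl <;> omega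

private lemma pairsL_flatten_nodup {u : ℕ} (hu : u ≠ 1) : (pairsL u).flatten.Nodup := by
  rw [List.nodup_flatten]
  constructor
  · intro P hP
    simp only [pairsL, List.mem_map, List.mem_range] at hP
    obtain ⟨j, hj, rfl⟩ := hP
    simp only [List.nodup_cons, List.mem_singleton, List.nodup_nil]
    exact ⟨by omega, by simp⟩
  · rw [pairsL, List.pairwise_map, List.pairwise_iff_getElem]
    intro i j hi hj hij
    rw [List.length_range] at hi hj
    rw [List.getElem_range, List.getElem_range]
    intro x hx hx'
    simp only [List.mem_cons, List.not_mem_nil, or_false] at hx hx'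
    omega

private lemma pairsL_avoids (hr : 5 ≤ r) {u : ℕ} (hu : u ≠ 1) (h2u : 2 * u ≤ r) :
    ∀ P ∈ pairsL u, AvoidsX r 1 P := by
  intro P hP
  simp only [pairsL, List.mem_map, List.mem_range] at hP
  obtain ⟨j, hj, rfl⟩ := hP
  have hu2 : 2 ≤ u := by omega
  refine pair_avoids hr (by omega) (by omega) ?_ ?_
  · intro h
    have h' : ((u : ℕ) : ZMod r) = ((1 : ℕ) : ZMod r) := by
      push_cast at h ⊢
      linear_combination h
    have := cast_inj_ltX (by omega) (by omega) h'
    omega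
  · intro h
    have h0 : ((u + 1 : ℕ) : ZMod r) = 0 := by
      push_cast at h ⊢
      linear_combination -h
    rw [ZMod.natCast_eq_zero_iff] at h0
    have := Nat.le_of_dvd (by omega) h0
    omega

private lemma one_ne_neg_one (hr : 5 ≤ r) : (1 : ZMod r) ≠ -1 := by
  intro h
  have h0 : ((2 : ℕ) : ZMod r) = 0 := by push_cast; linear_combination h
  rw [ZMod.natCast_eq_zero_iff] at h0
  have := Nat.le_of_dvd (by omega) h0
  omega

private lemma descL_avoids_one (hr : 5 ≤ r) {l : ℕ} (hl : 3 ≤ l) (hlr : l ≤ r) {v : ℕ} :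
    AvoidsX r 1 (descL v l) := by
  refine descL_avoids (by omega) (one_ne_neg_one hr) ?_
  intro h
  have h' : ((l - 1 : ℕ) : ZMod r) = ((1 : ℕ) : ZMod r) := by exact_mod_cast h
  have := cast_inj_ltX (by omega) (by omega) h'
  omega

/-- The key construction: a permutation with prescribed cycle type avoiding `y ↦ y + a`. -/
private lemma exists_avoid (hr : 5 ≤ r) (M : Multiset ℕ)
    (hM : ∀ n ∈ M, 2 ≤ n) (hsum : M.sum ≤ r) (a : ZMod r) (ha0 : a ≠ 0) (ha1 : a ≠ -1) :
    ∃ β : Perm (ZMod r), β.cycleType = M ∧ ∀ y, β y ≠ y + a := by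
  classical
  by_cases hA : a = 1
  · -- a = 1
    subst hA
    set u := M.count 2 with hu
    obtain ⟨T, hTcoe⟩ : ∃ T : List ℕ, (T : Multiset ℕ) = M.filter (fun l => ¬ (l = 2)) :=
      ⟨_, Multiset.coe_toList _⟩
    have hTmem : ∀ l ∈ T, 3 ≤ l := by
      intro l hl
      have : l ∈ (T : Multiset ℕ) := hl
      rw [hTcoe, Multiset.mem_filter] at this
      have := hM l this.1
      have h2 : l ≠ 2 := by
        have : l ∈ (T : Multiset ℕ) := hl
        rw [hTcoe, Multiset.mem_filter] at this
        exact this.2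
      omega
    have hMeq : M = Multiset.replicate u 2 + (T : Multiset ℕ) := by
      rw [hTcoe, hu, ← Multiset.filter_eq' M 2]
      exact (Multiset.filter_add_not _ M).symm
    have hsum' : 2 * u + T.sum = M.sum := by
      conv_rhs => rw [hMeq]
      rw [Multiset.sum_add, Multiset.sum_replicate, smul_eq_mul]
      have hTs : ((T : Multiset ℕ)).sum = T.sum := rfl
      rw [hTs]
      ring
    by_cases hu1 : u = 1
    · -- one 2-cycle
      match T, hTcoe, hTmem, hMeq, hsum' with
      | [], hTcoe, hTmem, hMeq, hsum' =>
        -- M = {2}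
        have hM2 : M = (([2] : List ℕ) : Multiset ℕ) := by
          rw [hMeq, hu1]
          rfl
        obtain ⟨β, hct, hav⟩ := engine hr 1 ha0 [[0, 2]]
          (by intro P hP; simp at hP; subst hP; rfl)
          (by simp)
          (by intro n hn; simp at hn; omega)
          (by
            intro P hP
            simp only [List.mem_singleton] at hP
            subst hP
            refine pair_avoids hr (by omega) (by omega) ?_ ?_
            · intro h
              have h' : ((2 : ℕ) : ZMod r) = ((1 : ℕ) : ZMod r) := by
                push_cast at h ⊢; linear_combination h
              have := cast_inj_ltX (by omega) (by omega) h'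
              omega
            · intro h
              have h' : ((0 : ℕ) : ZMod r) = ((3 : ℕ) : ZMod r) := by
                push_cast at h ⊢; linear_combination h
              have := cast_inj_ltX (by omega) (by omega) h'
              omega)
        refine ⟨β, ?_, hav⟩
        rw [hct, hM2]
        rfl
      | l :: T', hTcoe, hTmem, hMeq, hsum' =>
        -- combo block: [0,2] and comboL l, then descending blocks
        have hl3 : 3 ≤ l := hTmem l (List.mem_cons_self)
        have hT'3 : ∀ m ∈ T', 3 ≤ m := fun m hm => hTmem m (List.mem_cons_of_mem _ hm)
        have hsum2 : 2 + (l + T'.sum) = M.sum := by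
          rw [List.sum_cons] at hsum'
          omega
        have hsumr : l + 2 + T'.sum ≤ r := by omega
        obtain ⟨β, hct, hav⟩ := engine hr 1 ha0 ([0, 2] :: comboL l :: mkB descL (l + 2) T')
          (by
            intro P hP
            rcases List.mem_cons.mp hP with rfl | hP
            · rfl
            rcases List.mem_cons.mp hP with rfl | hP
            · rw [comboL_length]; omega
            · obtain ⟨w, m, hm, rfl⟩ := mk_mem_blocks T' _ P hP
              rw [descL_length]
              have := hT'3 m hm
              omega)
          (by
            simp only [List.flatten_cons]
            rw [List.nodup_append]
            refine ⟨by simp, ?_, ?_⟩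
            · rw [List.nodup_append]
              refine ⟨comboL_nodup hl3, mk_flatten_nodup (fun v m x hx => descL_mem hx) (fun v m => descL_nodup v m) T' (l + 2), ?_⟩
              intro x hx y hx' hxy
              subst hxy
              have h1 := comboL_mem hl3 hx
              have h2 := mk_flatten_mem (fun v m x hx => descL_mem hx) T' (l + 2) x hx'
              omega
            · intro x hx y hx' hxy
              subst hxy
              simp only [List.mem_cons, List.not_mem_nil, or_false] at hx
              rw [List.mem_append] at hx'
              rcases hx' with hx' | hx'
              · have := comboL_mem hl3 hx'
                omega
              · have := mk_flatten_mem (fun v m x hx => descL_mem hx) T' (l + 2) x hx'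
                omega)
          (by
            intro n hn
            simp only [List.flatten_cons, List.mem_append, List.mem_cons, List.not_mem_nil, or_false] at hn
            rcases hn with (rfl | rfl) | hn | hn
            · omega
            · omega
            · have := comboL_mem hl3 hn
              omega
            · have := mk_flatten_mem (fun v m x hx => descL_mem hx) T' (l + 2) n hn
              omega)
          (by
            intro P hP
            rcases List.mem_cons.mp hP with rfl | hP
            · refine pair_avoids hr (by omega) (by omega) ?_ ?_
              · intro h
                have h' : ((2 : ℕ) : ZMod r) = ((1 : ℕ) : ZMod r) := by
                  push_cast at h ⊢; linear_combination h
                have := cast_inj_ltX (by omega) (by omega) h'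
                omega
              · intro h
                have h' : ((0 : ℕ) : ZMod r) = ((3 : ℕ) : ZMod r) := by
                  push_cast at h ⊢; linear_combination h
                have := cast_inj_ltX (by omega) (by omega) h'
                omega
            rcases List.mem_cons.mp hP with rfl | hP
            · exact comboL_avoids hr hl3 (by omega)
            · obtain ⟨w, m, hm, rfl⟩ := mk_mem_blocks T' _ P hP
              have hm3 := hT'3 m hm
              have hmr : m ≤ r := by
                have : m ≤ T'.sum := List.le_sum_of_mem hm
                omega
              exact descL_avoids_one hr hm3 hmr)
        refine ⟨β, ?_, hav⟩
        rw [hct]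
        have hml : ([0, 2] :: comboL l :: mkB descL (l + 2) T').map List.length
            = 2 :: l :: T' := by
          simp only [List.map_cons]
          rw [comboL_length, mk_map_length (fun v m => descL_length v m)]
          rfl
        rw [hml, hMeq, hu1]
        rw [← Multiset.cons_coe, Multiset.replicate_one, Multiset.singleton_add]
    · -- u ≠ 1 : pair up the 2-cycles
      have h2u : 2 * u ≤ r := by omega
      obtain ⟨β, hct, hav⟩ := engine hr 1 ha0 (pairsL u ++ mkB descL (2 * u) T)
        (by
          intro P hP
          rw [List.mem_append] at hP
          rcases hP with hP | hP
          · simp only [pairsL, List.mem_map] at hP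
            obtain ⟨j, _, rfl⟩ := hP
            rfl
          · obtain ⟨w, m, hm, rfl⟩ := mk_mem_blocks T _ P hP
            rw [descL_length]
            have := hTmem m hm
            omega)
        (by
          rw [List.flatten_append, List.nodup_append]
          refine ⟨pairsL_flatten_nodup hu1,
            mk_flatten_nodup (fun v m x hx => descL_mem hx) (fun v m => descL_nodup v m) T (2 * u), ?_⟩
          intro x hx y hx' hxy
          subst hxy
          have h1 := pairsL_flatten_mem hx
          have h2 := mk_flatten_mem (fun v m x hx => descL_mem hx) T (2 * u) x hx'
          omega)
        (by
          intro n hn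
          rw [List.flatten_append, List.mem_append] at hn
          rcases hn with hn | hn
          · have := pairsL_flatten_mem hn
            omega
          · have := mk_flatten_mem (fun v m x hx => descL_mem hx) T (2 * u) n hn
            omega)
        (by
          intro P hP
          rw [List.mem_append] at hP
          rcases hP with hP | hP
          · exact pairsL_avoids hr hu1 h2u P hP
          · obtain ⟨w, m, hm, rfl⟩ := mk_mem_blocks T _ P hP
            have hm3 := hTmem m hm
            have hmr : m ≤ r := by
              have : m ≤ T.sum := List.le_sum_of_mem hm
              omega
            exact descL_avoids_one hr hm3 hmr)
      refine ⟨β, ?_, hav⟩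
      rw [hct]
      rw [List.map_append, pairsL_map_length, mk_map_length (fun v m => descL_length v m)]
      rw [hMeq, ← Multiset.coe_replicate, Multiset.coe_add]
  · -- general a : per-block interval patterns
    set pat : ℕ → ℕ → List ℕ := fun v l =>
      if ((l - 1 : ℕ) : ZMod r) = a then
        (if -((l - 1 : ℕ) : ZMod r) = a then swapL v l else ascL v l)
      else descL v l with hpat
    have Hlen : ∀ v l, (pat v l).length = l := by
      intro v l
      simp only [hpat]
      split_ifs <;> simp [descL_length, ascL_length, swapL_length]
    have Hmem : ∀ v l, ∀ x ∈ pat v l, v ≤ x ∧ x < v + l := by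
      intro v l x hx
      simp only [hpat] at hx
      split_ifs at hx
      · exact swapL_mem hx
      · exact ascL_mem hx
      · exact descL_mem hx
    have Hnd : ∀ v l, (pat v l).Nodup := by
      intro v l
      simp only [hpat]
      split_ifs
      · exact swapL_nodup v l
      · exact ascL_nodup v l
      · exact descL_nodup v l
    obtain ⟨β, hct, hav⟩ := engine hr a ha0 (mkB pat 0 M.toList)
      (by
        intro P hP
        obtain ⟨w, l, hl, rfl⟩ := mk_mem_blocks M.toList 0 P hP
        rw [Hlen]
        exact hM l (Multiset.mem_toList.mp hl))
      (mk_flatten_nodup Hmem Hnd M.toList 0)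
      (by
        intro n hn
        have := mk_flatten_mem Hmem M.toList 0 n hn
        have hms : M.toList.sum = M.sum := Multiset.sum_toList M
        omega)
      (by
        intro P hP
        obtain ⟨w, l, hl, rfl⟩ := mk_mem_blocks M.toList 0 P hP
        have hl2 : 2 ≤ l := hM l (Multiset.mem_toList.mp hl)
        have hlr : l ≤ r := le_trans (mem_le_sum (Multiset.mem_toList.mp hl)) hsum
        simp only [hpat]
        split_ifs with h1 h2
        · -- swap case: 2a = 0, l = r/2 + 1
          have h2a : ((2 * (l - 1) : ℕ) : ZMod r) = 0 := by
            push_cast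
            linear_combination h1 - h2
          rw [ZMod.natCast_eq_zero_iff] at h2a
          obtain ⟨c, hc⟩ := h2a
          have hr0 : 0 < r := Nat.pos_of_ne_zero (NeZero.ne r)
          have hceq : c = 1 := by
            rcases Nat.lt_or_ge c 1 with h0 | h1
            · exfalso
              have hc0 : c = 0 := by omega
              subst hc0
              omega
            · rcases Nat.lt_or_ge c 2 with h2 | h2
              · omega
              · exfalso
                have hge : r * 2 ≤ r * c := Nat.mul_le_mul_left r h2
                omega
          subst hceq
          have hrl : r = 2 * (l - 1) := by omega
          have hl4 : 4 ≤ l := by omega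
          refine swapL_avoids hl4 hA ?_ ha1 ?_
          · intro he
            have h' : ((l - 1 : ℕ) : ZMod r) = ((2 : ℕ) : ZMod r) := by
              rw [h1, he]; push_cast; ring
            have := cast_inj_ltX (by omega) (by omega) h'
            omega
          · intro he
            have h0 : (((l - 1) + (l - 2) : ℕ) : ZMod r) = 0 := by
              push_cast
              linear_combination h1 - he
            rw [ZMod.natCast_eq_zero_iff] at h0
            have hle := Nat.le_of_dvd (by omega) h0
            omega
        · exact ascL_avoids hl2 hA h2
        · exact descL_avoids hl2 ha1 h1)
    refine ⟨β, ?_, hav⟩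
    rw [hct, mk_map_length Hlen, Multiset.coe_toList]

end Main

/-- Lemma 3.5. For `r ≥ 5`, a permutation `α` of `Z_r` and `a ∈ Z_r`,
there is a permutation `π` of `Z_r` with `π(α(x)) - π(x) ≠ a` for every non-fixed point `x`
of `α`. -/
theorem stmt12 (r : ℕ) (hr : 5 ≤ r) (α : Equiv.Perm (ZMod r)) (a : ZMod r) :
    ∃ π : Equiv.Perm (ZMod r), ∀ x : ZMod r, α x ≠ x → π (α x) - π x ≠ a := by
  haveI : NeZero r := ⟨by omega⟩
  by_cases ha0 : a = 0
  · subst ha0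
    refine ⟨1, fun x hx => ?_⟩
    simpa [sub_eq_zero] using hx
  · have hM2 : ∀ n ∈ α.cycleType, 2 ≤ n := fun n hn =>
      Equiv.Perm.two_le_of_mem_cycleType hn
    have hsum : α.cycleType.sum ≤ r := by
      rw [Equiv.Perm.sum_cycleType]
      have := Finset.card_le_univ α.support
      rwa [ZMod.card] at this

    obtain ⟨β, hct, hav⟩ : ∃ β : Equiv.Perm (ZMod r),
        β.cycleType = α.cycleType ∧ ∀ y, β y ≠ y + a := by
      by_cases ha1 : a = -1
      · have h10 : (1 : ZMod r) ≠ 0 := by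
          intro h
          have h' : ((1 : ℕ) : ZMod r) = 0 := by exact_mod_cast h
          rw [ZMod.natCast_eq_zero_iff] at h'
          have := Nat.le_of_dvd one_pos h'
          omega
        obtain ⟨β', hct', hav'⟩ := exists_avoid hr α.cycleType hM2 hsum 1 h10
          (one_ne_neg_one hr)
        set ν : Equiv.Perm (ZMod r) := Equiv.neg (ZMod r) with hνdef
        have hνν : ν * ν = 1 := by
          ext z
          simp [hνdef, Equiv.Perm.mul_apply]
        have hinv : ν⁻¹ = ν := inv_eq_of_mul_eq_one_left hνν
        refine ⟨ν * β' * ν⁻¹, ?_, ?_⟩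
        · rw [Equiv.Perm.cycleType_conj, hct']
        · subst ha1
          intro y h
          simp only [hinv, Equiv.Perm.mul_apply, hνdef, Equiv.Perm.inv_def, Equiv.neg_symm, Equiv.neg_apply] at h
          exact hav' (-y) (by linear_combination -h)
      · exact exists_avoid hr α.cycleType hM2 hsum a ha0 ha1
    have hconj : IsConj α β := Equiv.Perm.isConj_iff_cycleType_eq.mpr hct.symm
    obtain ⟨c, hc⟩ := isConj_iff.mp hconj
    refine ⟨c, fun x _ => ?_⟩
    have hco : β (c x) = c (α x) := by
      rw [← hc]
      simp [Equiv.Perm.mul_apply]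
    intro h
    apply hav (c x)
    rw [hco]
    linear_combination h
end
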